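/- Let V := ⊕_{n∈ℤ} ℂ e_n be the complex vector space with basis {e_n : n ∈ ℤ}. Define invertible linear maps X_1, X_2 : V → V by X_1(e_n) = e_{n+1} and X_2(e_n) = 2^n e_{n+1} for all n ∈ ℤ. Then every linear subspace U ⊆ V satisfying X_1(U) = U and X_2(U) = U is either 0 or all of V. (In other words, the representation of the free group on two generators on V given by X_1 and X_2 is irreducible.) -/

import Mathlib

/-- The shift operator `X₁` on `V = ⊕_{n ∈ ℤ} ℂ e_n`, with `X₁ e_n = e_{n+1}`
(where `e_n = Finsupp.single n 1`). -/
noncomputable def shiftX₁ : (ℤ →₀ ℂ) →ₗ[ℂ] (ℤ →₀ ℂ) :=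
  Finsupp.lift _ ℂ _ fun n => Finsupp.single (n + 1) 1

/-- The weighted shift operator `X₂` on `V = ⊕_{n ∈ ℤ} ℂ e_n`, with `X₂ e_n = 2^n e_{n+1}`. -/
noncomputable def shiftX₂ : (ℤ →₀ ℂ) →ₗ[ℂ] (ℤ →₀ ℂ) :=
  Finsupp.lift _ ℂ _ fun n => ((2 : ℂ) ^ n) • Finsupp.single (n + 1) 1

noncomputable def invX₁ : (ℤ →₀ ℂ) →ₗ[ℂ] (ℤ →₀ ℂ) :=
  Finsupp.lift _ ℂ _ fun n => Finsupp.single (n - 1) 1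

noncomputable def invX₂ : (ℤ →₀ ℂ) →ₗ[ℂ] (ℤ →₀ ℂ) :=
  Finsupp.lift _ ℂ _ fun n => ((2 : ℂ) ^ (1 - n)) • Finsupp.single (n - 1) 1

lemma sX1_single (n : ℤ) (c : ℂ) : shiftX₁ (Finsupp.single n c) = Finsupp.single (n+1) c := by
  rw [shiftX₁, Finsupp.lift_apply, Finsupp.sum_single_index (by simp),
    Finsupp.smul_single, smul_eq_mul, mul_one]

lemma sX2_single (n : ℤ) (c : ℂ) :
    shiftX₂ (Finsupp.single n c) = Finsupp.single (n+1) ((2:ℂ)^n * c) := by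
  rw [shiftX₂, Finsupp.lift_apply, Finsupp.sum_single_index (by simp),
    smul_smul, Finsupp.smul_single, smul_eq_mul, mul_one, mul_comm]

lemma iX1_single (n : ℤ) (c : ℂ) : invX₁ (Finsupp.single n c) = Finsupp.single (n-1) c := by
  rw [invX₁, Finsupp.lift_apply, Finsupp.sum_single_index (by simp),
    Finsupp.smul_single, smul_eq_mul, mul_one]

lemma iX2_single (n : ℤ) (c : ℂ) :
    invX₂ (Finsupp.single n c) = Finsupp.single (n-1) ((2:ℂ)^(1-n) * c) := by
  rw [invX₂, Finsupp.lift_apply, Finsupp.sum_single_index (by simp),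
    smul_smul, Finsupp.smul_single, smul_eq_mul, mul_one, mul_comm]

lemma sX1_apply (v : ℤ →₀ ℂ) (k : ℤ) : shiftX₁ v k = v (k-1) := by
  induction v using Finsupp.induction_linear with
  | zero => simp
  | add f g hf hg => simp only [map_add, Finsupp.add_apply, hf, hg]
  | single n c =>
    rw [sX1_single]
    simp only [Finsupp.single_apply]
    rcases eq_or_ne n (k-1) with h | h
    · rw [if_pos (by omega), if_pos h]
    · rw [if_neg (by omega), if_neg h]

lemma sX2_apply (v : ℤ →₀ ℂ) (k : ℤ) : shiftX₂ v k = (2:ℂ)^(k-1) * v (k-1) := by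
  induction v using Finsupp.induction_linear with
  | zero => simp
  | add f g hf hg => simp only [map_add, Finsupp.add_apply, hf, hg]; ring
  | single n c =>
    rw [sX2_single]
    simp only [Finsupp.single_apply]
    rcases eq_or_ne n (k-1) with h | h
    · subst h; rw [if_pos (by omega), if_pos rfl]
    · rw [if_neg (by omega), if_neg h, mul_zero]

lemma iX1_apply (v : ℤ →₀ ℂ) (k : ℤ) : invX₁ v k = v (k+1) := by
  induction v using Finsupp.induction_linear with
  | zero => simp
  | add f g hf hg => simp only [map_add, Finsupp.add_apply, hf, hg]
  | single n c =>
    rw [iX1_single]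
    simp only [Finsupp.single_apply]
    rcases eq_or_ne n (k+1) with h | h
    · rw [if_pos (by omega), if_pos h]
    · rw [if_neg (by omega), if_neg h]

lemma iX2_apply (v : ℤ →₀ ℂ) (k : ℤ) : invX₂ v k = (2:ℂ)^(-k) * v (k+1) := by
  induction v using Finsupp.induction_linear with
  | zero => simp
  | add f g hf hg => simp only [map_add, Finsupp.add_apply, hf, hg]; ring
  | single n c =>
    rw [iX2_single]
    simp only [Finsupp.single_apply]
    rcases eq_or_ne n (k+1) with h | h
    · subst h; rw [if_pos (by omega), if_pos rfl]; norm_num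
    · rw [if_neg (by omega), if_neg h, mul_zero]

lemma bij1 : Function.Bijective shiftX₁ := by
  refine Function.bijective_iff_has_inverse.mpr ⟨invX₁, fun v => ?_, fun v => ?_⟩ <;>
    ext k <;> simp [sX1_apply, iX1_apply]

lemma two_zpow_ne {a b : ℤ} (h : a ≠ b) : (2:ℂ)^a ≠ (2:ℂ)^b := by
  intro hc
  apply h
  have := congrArg (‖·‖) hc
  simp only [norm_zpow] at this
  have h2 : ‖(2:ℂ)‖ = 2 := by norm_num
  rw [h2] at this
  exact zpow_right_injective₀ (by norm_num) (by norm_num) this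

lemma bij2 : Function.Bijective shiftX₂ := by
  refine Function.bijective_iff_has_inverse.mpr ⟨invX₂, fun v => ?_, fun v => ?_⟩ <;>
    ext k
  · rw [iX2_apply, sX2_apply]
    rw [← mul_assoc, ← zpow_add₀ (two_ne_zero)]
    simp
  · rw [sX2_apply, iX2_apply]
    rw [← mul_assoc, ← zpow_add₀ (two_ne_zero)]
    simp

/-- `X₁` and `X₂` are invertible linear maps, and every linear subspace `U` of
`V = ⊕_{n ∈ ℤ} ℂ e_n` with `X₁(U) = U` and `X₂(U) = U` is `0` or `V`; i.e. the representation
of the free group on two generators given by `X₁, X₂` is irreducible. -/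
theorem statement4 :
    Function.Bijective shiftX₁ ∧ Function.Bijective shiftX₂ ∧
    ∀ U : Submodule ℂ (ℤ →₀ ℂ),
      U.map shiftX₁ = U → U.map shiftX₂ = U → U = ⊥ ∨ U = ⊤ := by
  refine ⟨bij1, bij2, fun U hU1 hU2 => ?_⟩
  by_cases hbot : U = ⊥
  · exact Or.inl hbot
  right
  have mem1 : ∀ v, v ∈ U → shiftX₁ v ∈ U := fun v hv => by
    rw [← hU1]; exact Submodule.mem_map_of_mem hv
  have mem2 : ∀ v, v ∈ U → shiftX₂ v ∈ U := fun v hv => by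
    rw [← hU2]; exact Submodule.mem_map_of_mem hv
  have mem1' : ∀ v, shiftX₁ v ∈ U → v ∈ U := fun v hv => by
    rw [← hU1] at hv
    obtain ⟨w, hw, hwe⟩ := hv
    rwa [← bij1.injective hwe]
  -- every nonzero element of U yields some basis vector in U
  have key : ∀ s : ℕ, ∀ v : ℤ →₀ ℂ, v ∈ U → v ≠ 0 → v.support.card ≤ s →
      ∃ m, Finsupp.single m (1:ℂ) ∈ U := by
    intro s
    induction s with
    | zero =>
      intro v _ hv0 hc
      exact absurd (Finsupp.support_eq_empty.mp (Finset.card_eq_zero.mp (Nat.le_zero.mp hc)))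
        hv0
    | succ s ih =>
      intro v hv hv0 hc
      obtain ⟨n₀, hn₀⟩ := Finsupp.support_nonempty_iff.mpr hv0
      by_cases hcard : v.support.card = 1
      · obtain ⟨a, ha⟩ := Finset.card_eq_one.mp hcard
        have hne : v a ≠ 0 ∧ v = Finsupp.single a (v a) := Finsupp.support_eq_singleton.mp ha
        obtain ⟨c, hc0, hveq⟩ : ∃ c : ℂ, c ≠ 0 ∧ v = Finsupp.single a c := ⟨v a, hne.1, hne.2⟩
        refine ⟨a, ?_⟩
        have heq : c⁻¹ • v = Finsupp.single a 1 := by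
          rw [hveq, Finsupp.smul_single, smul_eq_mul, inv_mul_cancel₀ hc0]
        exact heq ▸ U.smul_mem _ hv
      · set w := shiftX₂ v - (2:ℂ)^n₀ • shiftX₁ v with hw_def
        have hwU : w ∈ U := U.sub_mem (mem2 v hv) (U.smul_mem _ (mem1 v hv))
        have hwk : ∀ k, w k = ((2:ℂ)^(k-1) - (2:ℂ)^n₀) * v (k-1) := by
          intro k
          rw [hw_def]
          rw [Finsupp.sub_apply, Finsupp.smul_apply, sX2_apply, sX1_apply, smul_eq_mul, sub_mul]
        have hcard2 : 1 < v.support.card := by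
          have : 0 < v.support.card := Finset.card_pos.mpr ⟨n₀, hn₀⟩
          omega
        obtain ⟨n₁, hn₁, hn₁₀⟩ := Finset.exists_mem_ne hcard2 n₀
        have hw0 : w ≠ 0 := by
          intro h
          have := hwk (n₁ + 1)
          rw [h] at this
          simp only [Finsupp.coe_zero, Pi.zero_apply, add_sub_cancel_right] at this
          exact (mul_ne_zero (sub_ne_zero.mpr (two_zpow_ne hn₁₀))
            (Finsupp.mem_support_iff.mp hn₁)) this.symm
        have hsub : w.support ⊆ (v.support.erase n₀).image (· + 1) := by
          intro k hk
          have hk' : w k ≠ 0 := Finsupp.mem_support_iff.mp hk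
          rw [hwk] at hk'
          have h1 : v (k-1) ≠ 0 := fun h => hk' (by rw [h, mul_zero])
          have h2 : k - 1 ≠ n₀ := by
            intro h
            exact hk' (by rw [h, sub_self, zero_mul])
          exact Finset.mem_image.mpr ⟨k - 1,
            Finset.mem_erase.mpr ⟨h2, Finsupp.mem_support_iff.mpr h1⟩, by ring⟩
        have hwc : w.support.card ≤ s := by
          have h1 := Finset.card_le_card hsub
          have h2 := Finset.card_image_le (f := (· + 1)) (s := v.support.erase n₀)
          have h3 := Finset.card_erase_of_mem hn₀
          omega
        exact ih w hwU hw0 hwc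
  obtain ⟨v, hvU, hv0⟩ := Submodule.ne_bot_iff U |>.mp hbot
  obtain ⟨m, hm⟩ := key v.support.card v hvU hv0 le_rfl
  have step : ∀ n : ℤ, Finsupp.single n (1:ℂ) ∈ U ↔ Finsupp.single (n+1) (1:ℂ) ∈ U := by
    intro n
    constructor
    · intro h
      have := mem1 _ h
      rwa [sX1_single] at this
    · intro h
      exact mem1' _ (by rwa [sX1_single])
  have all : ∀ n : ℤ, Finsupp.single n (1:ℂ) ∈ U := by
    have h2 : ∀ k : ℤ, Finsupp.single (m + k) (1:ℂ) ∈ U := by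
      intro k
      induction k using Int.induction_on with
      | zero => simpa using hm
      | succ i ih =>
        have := (step (m + i)).1 ih
        rwa [show m + (i + 1 : ℤ) = m + i + 1 by ring]
      | pred i ih =>
        refine (step (m + (-i - 1))).2 ?_
        rwa [show m + (-(i:ℤ) - 1) + 1 = m + (-(i:ℤ)) by ring]
    intro n
    have := h2 (n - m)
    rwa [show m + (n - m) = n by ring] at this
  rw [Submodule.eq_top_iff']
  intro f
  induction f using Finsupp.induction with
  | zero => exact U.zero_mem
  | single_add n c f _ _ ih =>
    refine U.add_mem ?_ ih
    have := U.smul_mem c (all n)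
    rwa [Finsupp.smul_single, smul_eq_mul, mul_one] at this
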